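/- Suppose λ1 = n for a natural number n (cast to ℂ in the operators), and let λ2 ∈ ℂ be arbitrary. Then every ℂ-linear subspace of R that contains the monomial x^{n+1} and is invariant under each of the eight operators E1, E2, E12, F1, F2, F12, H1, H2 is equal to all of R; i.e., the s1-twisted Verma module M^{s1}(λ) is generated by the single vector x^{λ1+1}. -/

import Mathlib

open MvPolynomial LieAlgebra.SpecialLinear

noncomputable section

/-- The polynomial algebra `R = ℂ[x,ξ2,ξ3]`
(variable `x` has index `0`, `ξ2` index `1`, `ξ3` index `2`). -/
abbrev R3 : Type := MvPolynomial (Fin 3) ℂ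

/-- Multiplication by the `i`-th variable as a `ℂ`-linear endomorphism of `R`
(`ξ 0` is multiplication by `x`, `ξ 1` by `ξ2`, `ξ 2` by `ξ3`). -/
def ξ (i : Fin 3) : Module.End ℂ R3 := LinearMap.mulLeft ℂ (X i)

/-- The partial derivative with respect to the `i`-th variable as a `ℂ`-linear endomorphism
of `R` (`D 0 = ∂x`, `D 1 = ∂2`, `D 2 = ∂3`). -/
def D (i : Fin 3) : Module.End ℂ R3 := (pderiv i).toLinearMap

/-- `F1 = ξ2∂3 − x(x∂x − (1/2)ξ3∂3 − λ1) − (1/2)x(ξ2 − (1/2)xξ3)∂2`. -/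
def F1 (lam1 : ℂ) : Module.End ℂ R3 :=
  ξ 1 * D 2 - ξ 0 * (ξ 0 * D 0 - (1/2 : ℂ) • (ξ 2 * D 2) - lam1 • 1)
    - (1/2 : ℂ) • (ξ 0 * (ξ 1 - (1/2 : ℂ) • (ξ 0 * ξ 2)) * D 1)

/-- `F2` is multiplication by `ξ3`. -/
def F2 : Module.End ℂ R3 := ξ 2

/-- `F12` is multiplication by `−ξ2 − (1/2)xξ3`. -/
def F12 : Module.End ℂ R3 := -ξ 1 - (1/2 : ℂ) • (ξ 0 * ξ 2)

/-- `E1 = ∂x + (1/2)ξ3∂2`. -/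
def E1 : Module.End ℂ R3 := D 0 + (1/2 : ℂ) • (ξ 2 * D 1)

/-- `E2 = (x∂x − ξ2∂2 − ξ3∂3 + λ2)∂3
      + (1/2)x(x∂x + ξ2∂2 − (1/2)xξ3∂2 − 2λ1 − λ2 − 1)∂2`. -/
def E2 (lam1 lam2 : ℂ) : Module.End ℂ R3 :=
  (ξ 0 * D 0 - ξ 1 * D 1 - ξ 2 * D 2 + lam2 • 1) * D 2
    + (1/2 : ℂ) • (ξ 0 * (ξ 0 * D 0 + ξ 1 * D 1 - (1/2 : ℂ) • (ξ 0 * ξ 2 * D 1)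
        - (2 * lam1 + lam2 + 1) • 1) * D 1)

/-- `E12 = ∂x∂3 + (ξ2∂2 + (1/2)ξ3∂3 − λ1 − λ2 − 1/2)∂2 + (1/2)x(∂x − (1/2)ξ3∂2)∂2`. -/
def E12 (lam1 lam2 : ℂ) : Module.End ℂ R3 :=
  D 0 * D 2 + (ξ 1 * D 1 + (1/2 : ℂ) • (ξ 2 * D 2) - (lam1 + lam2 + 1/2) • 1) * D 1
    + (1/2 : ℂ) • (ξ 0 * (D 0 - (1/2 : ℂ) • (ξ 2 * D 1)) * D 1)

/-- `H1 = −2x∂x − ξ2∂2 + ξ3∂3 + λ1`. -/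
def H1 (lam1 : ℂ) : Module.End ℂ R3 :=
  (-2 : ℂ) • (ξ 0 * D 0) - ξ 1 * D 1 + ξ 2 * D 2 + lam1 • 1

/-- `H2 = x∂x − ξ2∂2 − 2ξ3∂3 + λ2`. -/
def H2 (lam2 : ℂ) : Module.End ℂ R3 :=
  ξ 0 * D 0 - ξ 1 * D 1 + (-2 : ℂ) • (ξ 2 * D 2) + lam2 • 1

lemma E1_xpow (a : ℕ) : E1 (X 0 ^ (a+1) : R3) = ((a:ℂ)+1) • X 0 ^ a := by
  simp [E1, ξ, D, Module.End.mul_apply, smul_eq_C_mul]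

lemma F1_xpow (la : ℂ) (a : ℕ) : F1 la (X 0 ^ a : R3) = (la - (a:ℂ)) • X 0 ^ (a+1) := by
  cases a with
  | zero => simp [F1, ξ, D, Module.End.mul_apply, LinearMap.sub_apply, smul_eq_C_mul]; ring
  | succ k =>
    simp [F1, ξ, D, Module.End.mul_apply, LinearMap.sub_apply, smul_eq_C_mul]
    ring

lemma F2_apply (v : R3) : F2 v = X 2 * v := rfl

lemma F12_apply (v : R3) : F12 v = -(X 1 * v) - (1/2 : ℂ) • (X 0 * (X 2 * v)) := by
  simp [F12, ξ, Module.End.mul_apply]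

lemma monomial_eq_smul (d : Fin 3 →₀ ℕ) (r : ℂ) :
    (monomial d r : R3) = r • (X 0 ^ d 0 * X 1 ^ d 1 * X 2 ^ d 2) := by
  have hd : d = Finsupp.single 0 (d 0) + Finsupp.single 1 (d 1) + Finsupp.single 2 (d 2) := by
    ext i; fin_cases i <;> simp [Finsupp.single_apply]
  rw [smul_eq_C_mul]
  simp [X_pow_eq_monomial, monomial_mul, C_mul_monomial, ← hd]

lemma mem_of_smul_mem {p : Submodule ℂ R3} {c : ℂ} {v : R3} (hc : c ≠ 0)
    (h : c • v ∈ p) : v ∈ p := by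
  have := p.smul_mem c⁻¹ h
  rwa [smul_smul, inv_mul_cancel₀ hc, one_smul] at this

/-- If `λ1 = n` is a nonnegative integer, the `s1`-twisted Verma module `M^{s1}(λ)` is
generated by the single vector `x^{λ1+1}`: every `ℂ`-subspace of `R = ℂ[x,ξ2,ξ3]`
containing `x^{n+1}` and invariant under the eight operators
`E1, E2, E12, F1, F2, F12, H1, H2` is all of `R`. -/
theorem s1_twisted_generated_by_xpow (n : ℕ) (lam2 : ℂ) :
    ∀ p : Submodule ℂ R3, (X 0 ^ (n + 1) : R3) ∈ p →
      (∀ v ∈ p, E1 v ∈ p) →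
      (∀ v ∈ p, E2 (n : ℂ) lam2 v ∈ p) →
      (∀ v ∈ p, E12 (n : ℂ) lam2 v ∈ p) →
      (∀ v ∈ p, F1 (n : ℂ) v ∈ p) →
      (∀ v ∈ p, F2 v ∈ p) →
      (∀ v ∈ p, F12 v ∈ p) →
      (∀ v ∈ p, H1 (n : ℂ) v ∈ p) →
      (∀ v ∈ p, H2 lam2 v ∈ p) →
      p = ⊤ := by
  intro p hx0 hE1 _ _ hF1 hF2 hF12 _ _
  -- downward closure under E1
  have hdown : ∀ a : ℕ, (X 0 ^ (a+1) : R3) ∈ p → (X 0 ^ a : R3) ∈ p := by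
    intro a h
    have := hE1 _ h
    rw [E1_xpow] at this
    exact mem_of_smul_mem (Nat.cast_add_one_ne_zero a) this
  -- upward closure under F1 above n+1
  have hup : ∀ a : ℕ, n + 1 ≤ a → (X 0 ^ a : R3) ∈ p → (X 0 ^ (a+1) : R3) ∈ p := by
    intro a ha h
    have := hF1 _ h
    rw [F1_xpow] at this
    refine mem_of_smul_mem (c := (n : ℂ) - a) ?_ this
    have : (n : ℂ) ≠ (a : ℂ) := by
      exact_mod_cast Nat.ne_of_lt (Nat.lt_of_lt_of_le (Nat.lt_succ_self n) ha)
    exact sub_ne_zero.mpr this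
  have hxle : ∀ k : ℕ, (X 0 ^ (n + 1 - k) : R3) ∈ p := by
    intro k
    induction k with
    | zero => simpa using hx0
    | succ k ih =>
      rcases Nat.eq_zero_or_eq_succ_pred (n + 1 - k) with h | h
      · rw [Nat.sub_succ, h]; simpa [h] using ih
      · have h2 : n + 1 - (k + 1) = (n + 1 - k) - 1 := by omega
        rw [h2]
        have h3 : (n + 1 - k) - 1 + 1 = n + 1 - k := by omega
        have := hdown ((n + 1 - k) - 1)
        rw [h3] at this
        exact this ih
  have hx : ∀ a : ℕ, (X 0 ^ a : R3) ∈ p := by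
    intro a
    rcases le_or_gt a (n + 1) with h | h
    · have := hxle (n + 1 - a)
      rwa [Nat.sub_sub_self h] at this
    · have : ∀ k : ℕ, (X 0 ^ (n + 1 + k) : R3) ∈ p := by
        intro k
        induction k with
        | zero => simpa using hx0
        | succ k ih =>
          have := hup (n+1+k) (by omega) ih
          rwa [show n+1+(k+1) = n+1+k+1 from rfl]
      have h2 := this (a - (n + 1))
      rwa [show n + 1 + (a - (n+1)) = a by omega] at h2
  -- x^a ξ3^c
  have hxz : ∀ a c : ℕ, (X 0 ^ a * X 2 ^ c : R3) ∈ p := by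
    intro a c
    induction c with
    | zero => simpa using hx a
    | succ c ih =>
      have := hF2 _ ih
      rw [F2_apply] at this
      have heq : (X 0 ^ a * X 2 ^ (c+1) : R3) = X 2 * (X 0 ^ a * X 2 ^ c) := by ring
      rwa [heq]
  -- all monomials
  have hmono : ∀ b a c : ℕ, (X 0 ^ a * X 1 ^ b * X 2 ^ c : R3) ∈ p := by
    intro b
    induction b with
    | zero => intro a c; simpa using hxz a c
    | succ b ih =>
      intro a c
      have hv := ih a c
      have h12 := hF12 _ hv
      rw [F12_apply] at h12
      have h2 : ((1/2 : ℂ)) • (X 0 * (X 2 * (X 0 ^ a * X 1 ^ b * X 2 ^ c))) ∈ p := by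
        refine p.smul_mem _ ?_
        have := ih (a+1) (c+1)
        have heq : (X 0 ^ (a+1) * X 1 ^ b * X 2 ^ (c+1) : R3)
            = X 0 * (X 2 * (X 0 ^ a * X 1 ^ b * X 2 ^ c)) := by ring
        rwa [heq] at this
      have h1 : (X 1 * (X 0 ^ a * X 1 ^ b * X 2 ^ c) : R3) ∈ p := by
        have := p.add_mem h12 h2
        have heq : -(X 1 * (X 0 ^ a * X 1 ^ b * X 2 ^ c) : R3)
              - (1/2 : ℂ) • (X 0 * (X 2 * (X 0 ^ a * X 1 ^ b * X 2 ^ c)))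
              + (1/2 : ℂ) • (X 0 * (X 2 * (X 0 ^ a * X 1 ^ b * X 2 ^ c)))
            = -(X 1 * (X 0 ^ a * X 1 ^ b * X 2 ^ c)) := by ring
        rw [heq] at this
        simpa using p.neg_mem this
      have heq : (X 0 ^ a * X 1 ^ (b+1) * X 2 ^ c : R3)
          = X 1 * (X 0 ^ a * X 1 ^ b * X 2 ^ c) := by ring
      rwa [heq]
  rw [Submodule.eq_top_iff']
  intro f
  induction f using MvPolynomial.induction_on' with
  | monomial d r => rw [monomial_eq_smul]; exact p.smul_mem _ (hmono _ _ _)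
  | add f g hf hg => exact p.add_mem hf hg
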